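/- Let n ≥ 1 and 0 < p < ∞. There is a constant c > 0 depending only on n and p such that for every α ≥ 2 there exists a locally square integrable function g on (0,∞)×ℝⁿ with 0 < ‖g‖_{T^{p,2}_1} < ∞ and ‖g‖_{T^{p,2}_α} ≥ c α^{n/2} ‖g‖_{T^{p,2}_1}. (Consequently the growth α^{n/2} cannot be improved; in particular α^{n/τ} with τ = min(p,2) is optimal when p ≥ 2.) -/

import Mathlib

open MeasureTheory Metric Set Filter ENNReal

noncomputable section

/-- `ℝⁿ` as a Euclidean space. -/
abbrev En (n : ℕ) : Type := EuclideanSpace ℝ (Fin n)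

/-- `g` is (measurable and) locally square integrable on `(0,∞) × ℝⁿ`. -/
def LocSqInt (n : ℕ) (g : ℝ → En n → ℝ) : Prop :=
  Measurable (Function.uncurry g) ∧
  LocallyIntegrableOn (fun q : ℝ × En n => (g q.1 q.2) ^ 2)
    (Set.Ioi (0 : ℝ) ×ˢ (Set.univ : Set (En n)))

/-- The conical square function `A^{(α)} g (x)` of aperture `α`, with values in `[0,∞]`. -/
def conicalSq (n : ℕ) (α : ℝ) (g : ℝ → En n → ℝ) (x : En n) : ℝ≥0∞ :=
  (∫⁻ t in Set.Ioi (0 : ℝ), ∫⁻ y,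
      (ball x (α * t)).indicator (fun y => ENNReal.ofReal (|g t y| ^ 2 / t ^ (n + 1))) y) ^
    (1 / 2 : ℝ)

/-- The tent space quasi-norm `‖g‖_{T^{p,2}_α} = ‖A^{(α)} g‖_{L^p(ℝⁿ)}`, with values in `[0,∞]`. -/
def tentNorm (n : ℕ) (p α : ℝ) (g : ℝ → En n → ℝ) : ℝ≥0∞ :=
  (∫⁻ x, conicalSq n α g x ^ p) ^ (1 / p)

/-- The vertical square function `V g (x)`. -/
def vertSq (n : ℕ) (g : ℝ → En n → ℝ) (x : En n) : ℝ≥0∞ :=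
  (∫⁻ t in Set.Ioi (0 : ℝ), ENNReal.ofReal (|g t x| ^ 2 / t)) ^ (1 / 2 : ℝ)

/-- `‖V g‖_{L^p(ℝⁿ)}`, with values in `[0,∞]`. -/
def vertNorm (n : ℕ) (p : ℝ) (g : ℝ → En n → ℝ) : ℝ≥0∞ :=
  (∫⁻ x, vertSq n g x ^ p) ^ (1 / p)

/-- The tent `T_α B` of aperture `α` above the ball `B = B(x,r)`. -/
def tent (n : ℕ) (α : ℝ) (x : En n) (r : ℝ) : Set (ℝ × En n) :=
  {q | 0 < q.1 ∧ q.1 < r / α ∧ q.2 ∈ ball x (r - α * q.1)}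

/-- `∫_{T_α B} |g(t,y)|² dy dt / t`. -/
def tentIntegral (n : ℕ) (α : ℝ) (g : ℝ → En n → ℝ) (x : En n) (r : ℝ) : ℝ≥0∞ :=
  ∫⁻ q in tent n α x r, ENNReal.ofReal (|g q.1 q.2| ^ 2 / q.1)

/-- A `T^{p,2}_α`-atom associated with the ball `B(x,r)`: it is supported in the tent
`T_α B(x,r)` and satisfies `∫_{T_α B} |a|² dy dt/t ≤ α^{-n} |B|^{-(2/p - 1)}`. -/
def IsTentAtom (n : ℕ) (p α : ℝ) (a : ℝ → En n → ℝ) (x : En n) (r : ℝ) : Prop :=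
  (∀ t y, (t, y) ∉ tent n α x r → a t y = 0) ∧
  tentIntegral n α a x r ≤
    ENNReal.ofReal (α ^ (-(n : ℝ))) * volume (ball x r) ^ (-(2 / p - 1))

/-- The grand square function `G_λ g (x)` with exponent `nλ`. -/
def grandSq (n : ℕ) (l : ℝ) (g : ℝ → En n → ℝ) (x : En n) : ℝ≥0∞ :=
  (∫⁻ t in Set.Ioi (0 : ℝ), ∫⁻ y,
      ENNReal.ofReal ((t / (dist x y + t)) ^ ((n : ℝ) * l) * |g t y| ^ 2 / t ^ (n + 1))) ^
    (1 / 2 : ℝ)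

def gfun (n : ℕ) (R : ℝ) : ℝ → En n → ℝ := fun t y =>
  (Set.Ioo (1:ℝ) 2 ×ˢ ball (0:En n) R).indicator (fun _ => (1:ℝ)) (t, y)

lemma gfun_measurable (n : ℕ) (R : ℝ) : Measurable (Function.uncurry (gfun n R)) := by
  have : Function.uncurry (gfun n R)
      = (Set.Ioo (1:ℝ) 2 ×ˢ ball (0:En n) R).indicator (fun _ => (1:ℝ)) := by
    funext q; cases q; rfl
  rw [this]
  exact measurable_const.indicator (measurableSet_Ioo.prod measurableSet_ball)

lemma vol_ball (n : ℕ) (hn : 1 ≤ n) (x : En n) (r : ℝ) (hr : 0 ≤ r) :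
    volume (ball x r) = ENNReal.ofReal (r ^ n) * volume (ball (0 : En n) 1) := by
  haveI : Nonempty (Fin n) := ⟨⟨0, hn⟩⟩
  rw [Measure.addHaar_ball volume x hr, finrank_euclideanSpace_fin]

lemma inner_int (n : ℕ) (R b : ℝ) (x : En n) (t : ℝ) :
    (∫⁻ y, (ball x (b * t)).indicator
        (fun y => ENNReal.ofReal (|gfun n R t y| ^ 2 / t ^ (n + 1))) y)
    = (Ioo (1:ℝ) 2).indicator
        (fun t => ENNReal.ofReal (1 / t ^ (n + 1)) * volume (ball x (b * t) ∩ ball (0:En n) R)) t := by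
  by_cases ht : t ∈ Ioo (1:ℝ) 2
  · rw [Set.indicator_of_mem ht]
    have hfun : (fun y => ENNReal.ofReal (|gfun n R t y| ^ 2 / t ^ (n + 1)))
        = (ball (0:En n) R).indicator (fun _ => ENNReal.ofReal (1 / t ^ (n + 1))) := by
      funext y
      by_cases hy : y ∈ ball (0:En n) R
      · rw [Set.indicator_of_mem hy]
        have hg : gfun n R t y = 1 := Set.indicator_of_mem (Set.mem_prod.mpr ⟨ht, hy⟩) _
        rw [hg]; norm_num
      · rw [Set.indicator_of_notMem hy]
        have hg : gfun n R t y = 0 := Set.indicator_of_notMem (by simp [hy]) _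
        rw [hg]; simp
    rw [hfun, Set.indicator_indicator,
      lintegral_indicator (measurableSet_ball.inter measurableSet_ball),
      setLIntegral_const]
  · rw [Set.indicator_of_notMem ht]
    have hfun : ∀ y, (ball x (b * t)).indicator
        (fun y => ENNReal.ofReal (|gfun n R t y| ^ 2 / t ^ (n + 1))) y = 0 := by
      intro y
      have hg : gfun n R t y = 0 := Set.indicator_of_notMem (fun h => ht h.1) _
      simp [Set.indicator_apply, hg]
    exact (lintegral_congr hfun).trans lintegral_zero
lemma conical_eq (n : ℕ) (R b : ℝ) (x : En n) :
    conicalSq n b (gfun n R) x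
    = (∫⁻ t in Ioo (1:ℝ) 2,
        ENNReal.ofReal (1 / t ^ (n + 1)) * volume (ball x (b * t) ∩ ball (0:En n) R)) ^ (1/2 : ℝ) := by
  unfold conicalSq
  congr 1
  calc (∫⁻ t in Set.Ioi (0:ℝ), ∫⁻ y, (ball x (b * t)).indicator
          (fun y => ENNReal.ofReal (|gfun n R t y| ^ 2 / t ^ (n + 1))) y)
      = ∫⁻ t in Set.Ioi (0:ℝ), (Ioo (1:ℝ) 2).indicator
          (fun t => ENNReal.ofReal (1 / t ^ (n + 1)) * volume (ball x (b * t) ∩ ball (0:En n) R)) t :=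
        setLIntegral_congr_fun measurableSet_Ioi (fun t _ => inner_int n R b x t)
    _ = ∫⁻ t, (Set.Ioi (0:ℝ)).indicator ((Ioo (1:ℝ) 2).indicator
          (fun t => ENNReal.ofReal (1 / t ^ (n + 1)) * volume (ball x (b * t) ∩ ball (0:En n) R))) t :=
        (lintegral_indicator measurableSet_Ioi _).symm
    _ = ∫⁻ t, (Ioo (1:ℝ) 2).indicator
          (fun t => ENNReal.ofReal (1 / t ^ (n + 1)) * volume (ball x (b * t) ∩ ball (0:En n) R)) t := by
        have hss : Set.Ioi (0:ℝ) ∩ Ioo (1:ℝ) 2 = Ioo (1:ℝ) 2 :=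
          Set.inter_eq_self_of_subset_right (fun t ht => lt_trans zero_lt_one ht.1)
        rw [Set.indicator_indicator, hss]
    _ = _ := lintegral_indicator measurableSet_Ioo _

lemma conical_le (n : ℕ) (hn : 1 ≤ n) (R b : ℝ) (hb : 0 < b) (x : En n) :
    conicalSq n b (gfun n R) x ≤ volume (ball (0:En n) (2*b)) ^ (1/2:ℝ) := by
  rw [conical_eq]
  apply ENNReal.rpow_le_rpow _ (by norm_num)
  calc (∫⁻ t in Ioo (1:ℝ) 2,
        ENNReal.ofReal (1 / t ^ (n + 1)) * volume (ball x (b * t) ∩ ball (0:En n) R))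
      ≤ ∫⁻ _t in Ioo (1:ℝ) 2, volume (ball (0:En n) (2*b)) := by
        apply setLIntegral_mono' measurableSet_Ioo
        intro t ht
        have h1 : ENNReal.ofReal (1 / t ^ (n + 1)) ≤ 1 := by
          rw [ENNReal.ofReal_le_one, div_le_one (pow_pos (lt_trans zero_lt_one ht.1) _)]
          exact one_le_pow₀ ht.1.le
        have h2 : volume (ball x (b * t) ∩ ball (0:En n) R) ≤ volume (ball (0:En n) (2*b)) := by
          have hsub : ball x (b * t) ∩ ball (0:En n) R ⊆ ball x (2*b) :=
            (Set.inter_subset_left).trans (ball_subset_ball (by nlinarith [ht.2]))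
          calc volume (ball x (b * t) ∩ ball (0:En n) R) ≤ volume (ball x (2*b)) :=
                measure_mono hsub
            _ = volume (ball (0:En n) (2*b)) := by
                rw [vol_ball n hn x (2*b) (by linarith), vol_ball n hn 0 (2*b) (by linarith)]
        calc ENNReal.ofReal (1 / t ^ (n + 1)) * volume (ball x (b * t) ∩ ball (0:En n) R)
            ≤ 1 * volume (ball (0:En n) (2*b)) := mul_le_mul' h1 h2
          _ = volume (ball (0:En n) (2*b)) := one_mul _
    _ = volume (ball (0:En n) (2*b)) := by
        rw [setLIntegral_const, Real.volume_Ioo]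
        norm_num

lemma conical_ge (n : ℕ) (hn : 1 ≤ n) (R b : ℝ) (hb : 0 < b) (x : En n)
    (hx : dist x 0 + 2*b ≤ R) :
    (ENNReal.ofReal (1 / 2 ^ (n + 1)) * volume (ball (0:En n) b)) ^ (1/2:ℝ)
      ≤ conicalSq n b (gfun n R) x := by
  rw [conical_eq]
  apply ENNReal.rpow_le_rpow _ (by norm_num)
  calc ENNReal.ofReal (1 / 2 ^ (n + 1)) * volume (ball (0:En n) b)
      = ∫⁻ _t in Ioo (1:ℝ) 2, ENNReal.ofReal (1 / 2 ^ (n + 1)) * volume (ball (0:En n) b) := by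
        rw [setLIntegral_const, Real.volume_Ioo]
        norm_num
    _ ≤ ∫⁻ t in Ioo (1:ℝ) 2,
        ENNReal.ofReal (1 / t ^ (n + 1)) * volume (ball x (b * t) ∩ ball (0:En n) R) := by
        apply setLIntegral_mono' measurableSet_Ioo
        intro t ht
        apply mul_le_mul'
        · apply ENNReal.ofReal_le_ofReal
          exact one_div_le_one_div_of_le (pow_pos (lt_trans zero_lt_one ht.1) _)
            (pow_le_pow_left₀ (by linarith [ht.1]) ht.2.le _)
        · have hxb : volume (ball (0:En n) b) = volume (ball x b) := by
            rw [vol_ball n hn x b hb.le, vol_ball n hn 0 b hb.le]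
          rw [hxb]
          apply measure_mono
          intro y hy
          rw [mem_ball] at hy
          constructor
          · rw [mem_ball]
            have : b ≤ b * t := le_mul_of_one_le_right hb.le ht.1.le
            linarith
          · rw [mem_ball]
            calc dist y 0 ≤ dist y x + dist x 0 := dist_triangle _ _ _
              _ < b + dist x 0 := by linarith
              _ ≤ R := by linarith

lemma conical_zero (n : ℕ) (R : ℝ) (x : En n) (hx : R + 2 ≤ dist x 0) :
    conicalSq n 1 (gfun n R) x = 0 := by
  rw [conical_eq]
  have h0 : ∫⁻ t in Ioo (1:ℝ) 2,
      ENNReal.ofReal (1 / t ^ (n + 1)) * volume (ball x (1 * t) ∩ ball (0:En n) R) = 0 := by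
    rw [setLIntegral_congr_fun measurableSet_Ioo (fun t ht => ?_), lintegral_zero]
    have hemp : ball x (1 * t) ∩ ball (0:En n) R = ∅ := by
      ext y
      simp only [Set.mem_inter_iff, mem_ball, Set.mem_empty_iff_false, iff_false, not_and]
      intro h1 h2
      have h3 := dist_triangle x y (0 : En n)
      rw [dist_comm x y] at h3
      linarith [ht.2]
    rw [hemp, measure_empty, mul_zero]
  rw [h0]
  exact ENNReal.zero_rpow_of_pos (by norm_num)

lemma gfun_locsq (n : ℕ) (R : ℝ) : LocSqInt n (gfun n R) := by
  constructor
  · exact gfun_measurable n R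
  · apply LocallyIntegrable.locallyIntegrableOn
    apply Integrable.locallyIntegrable
    have heq : (fun q : ℝ × En n => (gfun n R q.1 q.2) ^ 2)
        = (Set.Ioo (1:ℝ) 2 ×ˢ ball (0:En n) R).indicator (fun _ => (1:ℝ)) := by
      funext q
      by_cases h : q ∈ Set.Ioo (1:ℝ) 2 ×ˢ ball (0:En n) R
      · have hg : gfun n R q.1 q.2 = 1 := Set.indicator_of_mem (by simpa using h) _
        rw [hg, Set.indicator_of_mem h]
        norm_num
      · have hg : gfun n R q.1 q.2 = 0 := Set.indicator_of_notMem (by simpa using h) _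
        rw [hg, Set.indicator_of_notMem h]
        norm_num
    rw [heq, integrable_indicator_iff (measurableSet_Ioo.prod measurableSet_ball)]
    rw [integrableOn_const_iff]
    right
    rw [Measure.volume_eq_prod, Measure.prod_prod]
    exact ENNReal.mul_lt_top (by rw [Real.volume_Ioo]; exact ENNReal.ofReal_lt_top)
      measure_ball_lt_top
lemma key_ineq (n : ℕ) (hn : 1 ≤ n) (p : ℝ) (hp : 0 < p) (α : ℝ) (hα : 2 ≤ α) :
    ENNReal.ofReal ((((1:ℝ)/(2^(n+1) * 2^n)) ^ ((1:ℝ)/2) * ((2:ℝ)/5) ^ ((n:ℝ)/p)) * α ^ ((n:ℝ)/2))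
        * ((volume (ball (0:En n) (2*1)) ^ (1/2:ℝ)) ^ p * volume (ball (0:En n) (4*α+2))) ^ (1/p)
    ≤ (((ENNReal.ofReal (1/2^(n+1)) * volume (ball (0:En n) α)) ^ (1/2:ℝ)) ^ p
        * volume (ball (0:En n) (2*α))) ^ (1/p) := by
  have hα0 : (0:ℝ) < α := lt_of_lt_of_le two_pos hα
  have hp' : (0:ℝ) < 1/p := by positivity
  have hv0 : volume (ball (0:En n) 1) ≠ 0 := (measure_ball_pos _ _ one_pos).ne'
  have hvtop : volume (ball (0:En n) 1) ≠ ⊤ := measure_ball_lt_top.ne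
  rw [show ((2:ℝ)*1) = (2:ℝ) by norm_num]
  rw [vol_ball n hn 0 2 (by norm_num), vol_ball n hn 0 (4*α+2) (by linarith),
      vol_ball n hn 0 α hα0.le, vol_ball n hn 0 (2*α) (by linarith)]
  set v := volume (ball (0:En n) 1) with hv
  have hform : ∀ a b : ℝ, 0 < a → 0 < b →
      (((ENNReal.ofReal a * v) ^ (1/2:ℝ)) ^ p * (ENNReal.ofReal b * v)) ^ (1/p)
      = ENNReal.ofReal (a ^ (1/2:ℝ) * b ^ (1/p)) * (v ^ (1/2:ℝ) * v ^ (1/p)) := by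
    intro a b ha hb
    rw [← ENNReal.rpow_mul, ENNReal.mul_rpow_of_nonneg _ _ hp'.le, ← ENNReal.rpow_mul,
        (by field_simp : (1/2*p)*(1/p) = (1/2:ℝ)),
        ENNReal.mul_rpow_of_nonneg _ _ (by norm_num : (0:ℝ) ≤ 1/2),
        ENNReal.mul_rpow_of_nonneg _ _ hp'.le,
        ENNReal.ofReal_rpow_of_pos ha, ENNReal.ofReal_rpow_of_pos hb,
        ENNReal.ofReal_mul (by positivity)]
    ring
  rw [← mul_assoc (ENNReal.ofReal (1/2^(n+1))),
      ← ENNReal.ofReal_mul (by positivity : (0:ℝ) ≤ 1/2^(n+1))]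
  rw [hform ((2:ℝ)^n) ((4*α+2)^n) (by positivity) (by positivity),
      hform ((1:ℝ)/2^(n+1) * α^n) ((2*α)^n) (by positivity) (by positivity)]
  rw [← mul_assoc, ← ENNReal.ofReal_mul (by positivity)]
  apply mul_le_mul_left
  apply ENNReal.ofReal_le_ofReal
  -- now a real inequality
  have e1 : ((2:ℝ)^n) ^ (1/2:ℝ) * ((1:ℝ)/(2^(n+1) * 2^n)) ^ (1/2:ℝ)
      = ((1:ℝ)/2^(n+1)) ^ (1/2:ℝ) := by
    rw [← Real.mul_rpow (by positivity) (by positivity)]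
    congr 1
    field_simp
  have e2 : ((1:ℝ)/2^(n+1) * α^n) ^ (1/2:ℝ)
      = ((1:ℝ)/2^(n+1)) ^ (1/2:ℝ) * α ^ ((n:ℝ)/2) := by
    rw [Real.mul_rpow (by positivity) (by positivity), ← Real.rpow_natCast α n,
        ← Real.rpow_mul hα0.le, show ((n:ℝ))*(1/2) = (n:ℝ)/2 by ring]
  have e3 : ((2*α:ℝ)^n) ^ (1/p) = (2*α) ^ ((n:ℝ)/p) := by
    rw [← Real.rpow_natCast (2*α) n, ← Real.rpow_mul (by linarith),
        show ((n:ℝ))*(1/p) = (n:ℝ)/p by ring]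
  have e4 : ((4*α+2:ℝ)^n) ^ (1/p) = (4*α+2) ^ ((n:ℝ)/p) := by
    rw [← Real.rpow_natCast (4*α+2) n, ← Real.rpow_mul (by linarith),
        show ((n:ℝ))*(1/p) = (n:ℝ)/p by ring]
  have e5 : ((2:ℝ)/5) ^ ((n:ℝ)/p) * (4*α+2) ^ ((n:ℝ)/p) ≤ (2*α) ^ ((n:ℝ)/p) := by
    rw [← Real.mul_rpow (by norm_num) (by linarith)]
    exact Real.rpow_le_rpow (by positivity) (by linarith) (by positivity)
  rw [e2, e3, e4]
  calc ((1:ℝ)/(2^(n+1) * 2^n)) ^ (1/2:ℝ) * ((2:ℝ)/5) ^ ((n:ℝ)/p) * α ^ ((n:ℝ)/2)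
        * (((2:ℝ)^n) ^ (1/2:ℝ) * (4*α+2) ^ ((n:ℝ)/p))
      = (((2:ℝ)^n) ^ (1/2:ℝ) * ((1:ℝ)/(2^(n+1) * 2^n)) ^ (1/2:ℝ))
        * ((((2:ℝ)/5) ^ ((n:ℝ)/p) * (4*α+2) ^ ((n:ℝ)/p)) * α ^ ((n:ℝ)/2)) := by ring
    _ = ((1:ℝ)/2^(n+1)) ^ (1/2:ℝ)
        * ((((2:ℝ)/5) ^ ((n:ℝ)/p) * (4*α+2) ^ ((n:ℝ)/p)) * α ^ ((n:ℝ)/2)) := by rw [e1]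
    _ ≤ ((1:ℝ)/2^(n+1)) ^ (1/2:ℝ) * ((2*α) ^ ((n:ℝ)/p) * α ^ ((n:ℝ)/2)) := by
        apply mul_le_mul_of_nonneg_left _ (by positivity)
        exact mul_le_mul_of_nonneg_right e5 (by positivity)
    _ = ((1:ℝ)/2^(n+1)) ^ (1/2:ℝ) * α ^ ((n:ℝ)/2) * (2*α) ^ ((n:ℝ)/p) := by ring

/-- (Sharpness: the growth `α^{n/2}` is attained.) There is `c = c(n,p) > 0`
such that for every `α ≥ 2` there is a locally square integrable `g` with
`0 < ‖g‖_{T^{p,2}_1} < ∞` and `‖g‖_{T^{p,2}_α} ≥ c α^{n/2} ‖g‖_{T^{p,2}_1}`. -/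
theorem statement14 (n : ℕ) (hn : 1 ≤ n) (p : ℝ) (hp : 0 < p) :
    ∃ c : ℝ, 0 < c ∧ ∀ α : ℝ, 2 ≤ α →
      ∃ g : ℝ → En n → ℝ, LocSqInt n g ∧
        0 < tentNorm n p 1 g ∧ tentNorm n p 1 g < ⊤ ∧
        ENNReal.ofReal (c * α ^ ((n : ℝ) / 2)) * tentNorm n p 1 g ≤ tentNorm n p α g := by
  refine ⟨((1:ℝ)/(2^(n+1) * 2^n)) ^ ((1:ℝ)/2) * ((2:ℝ)/5) ^ ((n:ℝ)/p), by positivity, ?_⟩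
  intro α hα
  have hα0 : (0:ℝ) < α := lt_of_lt_of_le two_pos hα
  set g := gfun n (4*α) with hgdef
  -- upper bound for the aperture-1 integral
  have hub : ∀ x : En n, conicalSq n 1 g x ^ p
      ≤ (volume (ball (0:En n) (2*1)) ^ (1/2:ℝ)) ^ p :=
    fun x => ENNReal.rpow_le_rpow (conical_le n hn (4*α) 1 one_pos x) hp.le
  have hI1_le : (∫⁻ x, conicalSq n 1 g x ^ p)
      ≤ (volume (ball (0:En n) (2*1)) ^ (1/2:ℝ)) ^ p * volume (ball (0:En n) (4*α+2)) := by
    rw [← lintegral_add_compl (fun x => conicalSq n 1 g x ^ p)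
      (measurableSet_ball : MeasurableSet (ball (0:En n) (4*α+2)))]
    have h2 : ∫⁻ x in (ball (0:En n) (4*α+2))ᶜ, conicalSq n 1 g x ^ p = 0 := by
      rw [setLIntegral_congr_fun measurableSet_ball.compl (fun x hx => ?_),
        lintegral_zero]
      have hd : 4*α + 2 ≤ dist x 0 := by
        simpa [mem_ball, not_lt] using hx
      rw [conical_zero n (4*α) x hd, ENNReal.zero_rpow_of_pos hp]
    rw [h2, add_zero]
    calc ∫⁻ x in ball (0:En n) (4*α+2), conicalSq n 1 g x ^ p
        ≤ ∫⁻ _x in ball (0:En n) (4*α+2), (volume (ball (0:En n) (2*1)) ^ (1/2:ℝ)) ^ p :=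
          setLIntegral_mono' measurableSet_ball fun x _ => hub x
      _ = _ := setLIntegral_const _ _
  -- lower bounds
  have hlow : ∀ b r : ℝ, 0 < b → 0 < r → r + 2*b ≤ 4*α →
      ((ENNReal.ofReal (1/2^(n+1)) * volume (ball (0:En n) b)) ^ (1/2:ℝ)) ^ p
        * volume (ball (0:En n) r)
      ≤ ∫⁻ x, conicalSq n b g x ^ p := by
    intro b r hb hr hcond
    calc ((ENNReal.ofReal (1/2^(n+1)) * volume (ball (0:En n) b)) ^ (1/2:ℝ)) ^ p
          * volume (ball (0:En n) r)
        = ∫⁻ _x in ball (0:En n) r,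
            ((ENNReal.ofReal (1/2^(n+1)) * volume (ball (0:En n) b)) ^ (1/2:ℝ)) ^ p :=
          (setLIntegral_const _ _).symm
      _ ≤ ∫⁻ x in ball (0:En n) r, conicalSq n b g x ^ p := by
          apply setLIntegral_mono' measurableSet_ball
          intro x hx
          apply ENNReal.rpow_le_rpow _ hp.le
          apply conical_ge n hn (4*α) b hb x
          have : dist x 0 < r := by simpa [mem_ball] using hx
          linarith
      _ ≤ _ := setLIntegral_le_lintegral _ _
  -- positivity and finiteness facts
  have hBpos : 0 < ENNReal.ofReal (1/2^(n+1)) * volume (ball (0:En n) 1) :=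
    ENNReal.mul_pos (ENNReal.ofReal_pos.mpr (by positivity)).ne'
      (measure_ball_pos _ _ one_pos).ne'
  have hBtop : ENNReal.ofReal (1/2^(n+1)) * volume (ball (0:En n) 1) ≠ ⊤ :=
    ENNReal.mul_ne_top ENNReal.ofReal_ne_top measure_ball_lt_top.ne
  have hI1_pos : 0 < ∫⁻ x, conicalSq n 1 g x ^ p := by
    refine lt_of_lt_of_le ?_ (hlow 1 2 one_pos two_pos (by linarith))
    apply ENNReal.mul_pos _ (measure_ball_pos _ _ two_pos).ne'
    have h12 : 0 < (ENNReal.ofReal (1/2^(n+1)) * volume (ball (0:En n) 1)) ^ (1/2:ℝ) :=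
      ENNReal.rpow_pos hBpos hBtop
    have h12t : (ENNReal.ofReal (1/2^(n+1)) * volume (ball (0:En n) 1)) ^ (1/2:ℝ) ≠ ⊤ :=
      ENNReal.rpow_ne_top_of_nonneg (by norm_num) hBtop
    exact (ENNReal.rpow_pos h12 h12t).ne'
  have hUtop : (volume (ball (0:En n) (2*1)) ^ (1/2:ℝ)) ^ p
      * volume (ball (0:En n) (4*α+2)) ≠ ⊤ :=
    ENNReal.mul_ne_top
      (ENNReal.rpow_ne_top_of_nonneg hp.le
        (ENNReal.rpow_ne_top_of_nonneg (by norm_num) measure_ball_lt_top.ne))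
      measure_ball_lt_top.ne
  have hI1_top : (∫⁻ x, conicalSq n 1 g x ^ p) ≠ ⊤ :=
    fun h => hUtop (top_le_iff.mp (h ▸ hI1_le))
  have ht1 : tentNorm n p 1 g = (∫⁻ x, conicalSq n 1 g x ^ p) ^ (1/p) := rfl
  have htα : tentNorm n p α g = (∫⁻ x, conicalSq n α g x ^ p) ^ (1/p) := rfl
  refine ⟨g, gfun_locsq n (4*α), ?_, ?_, ?_⟩
  · rw [ht1]
    exact ENNReal.rpow_pos hI1_pos hI1_top
  · rw [ht1]
    exact ENNReal.rpow_lt_top_of_nonneg (by positivity) hI1_top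
  · rw [ht1, htα]
    calc ENNReal.ofReal (((1:ℝ)/(2^(n+1) * 2^n)) ^ ((1:ℝ)/2) * ((2:ℝ)/5) ^ ((n:ℝ)/p)
            * α ^ ((n:ℝ)/2)) * (∫⁻ x, conicalSq n 1 g x ^ p) ^ (1/p)
        ≤ ENNReal.ofReal (((1:ℝ)/(2^(n+1) * 2^n)) ^ ((1:ℝ)/2) * ((2:ℝ)/5) ^ ((n:ℝ)/p)
            * α ^ ((n:ℝ)/2)) *
            ((volume (ball (0:En n) (2*1)) ^ (1/2:ℝ)) ^ p
              * volume (ball (0:En n) (4*α+2))) ^ (1/p) :=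
          mul_le_mul_right (ENNReal.rpow_le_rpow hI1_le (by positivity)) _
      _ ≤ (((ENNReal.ofReal (1/2^(n+1)) * volume (ball (0:En n) α)) ^ (1/2:ℝ)) ^ p
            * volume (ball (0:En n) (2*α))) ^ (1/p) := key_ineq n hn p hp α hα
      _ ≤ (∫⁻ x, conicalSq n α g x ^ p) ^ (1/p) :=
          ENNReal.rpow_le_rpow (hlow α (2*α) hα0 (by linarith) (by linarith)) (by positivity)

end
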